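/- If n+1 is odd, then the maximum number of mutually orthogonal vectors in ℝ^{2n+1} each lying in W = span(Z₁,…,Zₙ) or in the set {X₀ + ε₁X₁ + ⋯ + εₙXₙ : εᵢ ∈ {±1}} (up to nonzero scalar) is exactly n+1. -/

import Mathlib

open Finset


lemma aux_key {N : ℕ} {A : Type*} [Fintype A] [DecidableEq A] {e : A → Fin N → ℝ}
    (he : ∀ a b, ∑ i, e a i * e b i = if a = b then 1 else 0)
    (c d : A → ℝ) :
    ∑ i, (∑ a, c a * e a i) * (∑ b, d b * e b i) = ∑ a, c a * d a := by
  have h1 : ∀ i : Fin N, (∑ a, c a * e a i) * (∑ b, d b * e b i)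
      = ∑ a, ∑ b, (c a * d b) * (e a i * e b i) := by
    intro i
    rw [Finset.sum_mul_sum]
    exact Finset.sum_congr rfl fun a _ => Finset.sum_congr rfl fun b _ => by ring
  calc ∑ i, (∑ a, c a * e a i) * (∑ b, d b * e b i)
      = ∑ i, ∑ a, ∑ b, (c a * d b) * (e a i * e b i) := Finset.sum_congr rfl fun i _ => h1 i
    _ = ∑ a, ∑ b, ∑ i, (c a * d b) * (e a i * e b i) := by
        rw [Finset.sum_comm]
        exact Finset.sum_congr rfl fun a _ => Finset.sum_comm
    _ = ∑ a, ∑ b, (c a * d b) * (if a = b then 1 else 0) := by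
        refine Finset.sum_congr rfl fun a _ => Finset.sum_congr rfl fun b _ => ?_
        rw [← Finset.mul_sum, he]
    _ = ∑ a, c a * d a := by
        simp [mul_ite, Finset.sum_ite_eq]

lemma aux_pm {N : ℕ} (hN : Odd N) (t : Fin N → ℝ) (ht : ∀ i, t i = 1 ∨ t i = -1) :
    ∑ i, t i ≠ 0 := by
  classical
  intro h0
  set S := Finset.univ.filter (fun i => t i = 1) with hS
  have h1 : ∑ i ∈ S, t i = (S.card : ℝ) := by
    rw [Finset.sum_congr rfl (fun i hi => (Finset.mem_filter.mp hi).2)]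
    simp [hS]
  have h2 : ∑ i ∈ Sᶜ, t i = -((Sᶜ.card : ℝ)) := by
    have hh : ∀ i ∈ Sᶜ, t i = -1 := by
      intro i hi
      rcases ht i with h | h
      · exact absurd (Finset.mem_filter.mpr ⟨Finset.mem_univ i, h⟩) (Finset.mem_compl.mp hi)
      · exact h
    rw [Finset.sum_congr rfl hh]
    simp
  have h3 : (S.card : ℝ) = (Sᶜ.card : ℝ) := by
    have := Finset.sum_add_sum_compl S t
    rw [h1, h2, h0] at this
    linarith
  have h4 : S.card = Sᶜ.card := Nat.cast_injective h3
  have h5 : S.card + Sᶜ.card = N := by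
    simpa using Finset.card_add_card_compl S
  rcases hN with ⟨k, hk⟩
  omega

lemma aux_inner {n : ℕ} {X : Fin (n+1) → (Fin (2*n+1) → ℝ)} {Z : Fin n → (Fin (2*n+1) → ℝ)}
    (hON : ∀ a b : Fin (n + 1) ⊕ Fin n,
      ∑ i, Sum.elim X Z a i * Sum.elim X Z b i = if a = b then 1 else 0)
    (cX dX : Fin (n+1) → ℝ) (cZ dZ : Fin n → ℝ) :
    ∑ i, (∑ k, cX k * X k i + ∑ j, cZ j * Z j i) * (∑ k, dX k * X k i + ∑ j, dZ j * Z j i)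
      = ∑ k, cX k * dX k + ∑ j, cZ j * dZ j := by
  have := aux_key hON (Sum.elim cX cZ) (Sum.elim dX dZ)
  simpa [Fintype.sum_sum_type] using this

/-- If `n+1` is odd, the maximum number of mutually orthogonal nonzero vectors in
`ℝ^{2n+1}` each lying in `W = span(Z₁,…,Zₙ)` or being a nonzero scalar multiple of
some `X₀ + ε₁X₁ + ⋯ + εₙXₙ` (`εᵢ = ±1`) is exactly `n+1`. -/
theorem stmt_14 (n : ℕ) (hodd : Odd (n + 1))
    (X : Fin (n + 1) → (Fin (2 * n + 1) → ℝ))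
    (Z : Fin n → (Fin (2 * n + 1) → ℝ))
    (hON : ∀ a b : Fin (n + 1) ⊕ Fin n,
      ∑ i, Sum.elim X Z a i * Sum.elim X Z b i = if a = b then 1 else 0) :
    (∃ v : Fin (n + 1) → (Fin (2 * n + 1) → ℝ),
      (∀ l, v l ≠ 0 ∧
        ((∃ c : Fin n → ℝ, v l = ∑ j, c j • Z j) ∨
          (∃ (c : ℝ) (ε : Fin (n + 1) → ℝ), c ≠ 0 ∧ ε 0 = 1 ∧
            (∀ i, ε i = 1 ∨ ε i = -1) ∧ v l = c • ∑ i, ε i • X i))) ∧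
      ∀ l m, l ≠ m → ∑ i, v l i * v m i = 0) ∧
    ¬ (∃ v : Fin (n + 2) → (Fin (2 * n + 1) → ℝ),
      (∀ l, v l ≠ 0 ∧
        ((∃ c : Fin n → ℝ, v l = ∑ j, c j • Z j) ∨
          (∃ (c : ℝ) (ε : Fin (n + 1) → ℝ), c ≠ 0 ∧ ε 0 = 1 ∧
            (∀ i, ε i = 1 ∨ ε i = -1) ∧ v l = c • ∑ i, ε i • X i))) ∧
      ∀ l m, l ≠ m → ∑ i, v l i * v m i = 0) := by
  classical
  have hXX : ∀ j k, (∑ i, X j i * X k i) = if j = k then 1 else 0 := by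
    intro j k; simpa using hON (Sum.inl j) (Sum.inl k)
  have hZZ : ∀ j k, (∑ i, Z j i * Z k i) = if j = k then 1 else 0 := by
    intro j k; simpa using hON (Sum.inr j) (Sum.inr k)
  have hZX : ∀ j k, (∑ i, Z j i * X k i) = 0 := by
    intro j k; simpa using hON (Sum.inr j) (Sum.inl k)
  have hXZ : ∀ j k, (∑ i, X j i * Z k i) = 0 := by
    intro j k; simpa using hON (Sum.inl j) (Sum.inr k)
  constructor
  · -- existence of n+1 vectors
    refine ⟨fun l => if h : (l : ℕ) < n then Z ⟨l, h⟩ else ∑ i, X i, fun l => ?_, fun l m hlm => ?_⟩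
    · by_cases hl : (l : ℕ) < n
      · simp only [dif_pos hl]
        constructor
        · intro h0
          have := hZZ ⟨l, hl⟩ ⟨l, hl⟩
          rw [h0] at this
          simp at this
        · exact Or.inl ⟨Pi.single ⟨l, hl⟩ 1, by simp [Pi.single_apply, Finset.sum_ite_eq]⟩
      · simp only [dif_neg hl]
        constructor
        · intro h0
          have hXsum : ∑ i, (∑ k, X k) i * (∑ k, X k) i = (n + 1 : ℝ) := by
            have : ∀ i' : Fin (2*n+1), (∑ k, X k) i'
                = ∑ k, (1:ℝ) * X k i' + ∑ j, (0:ℝ) * Z j i' := by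
              intro i'; simp [Finset.sum_apply]
            simp_rw [this]
            rw [aux_inner hON]
            simp
          rw [h0] at hXsum
          simp at hXsum
          have : (0:ℝ) < n + 1 := by positivity
          linarith
        · exact Or.inr ⟨1, fun _ => 1, one_ne_zero, rfl, fun _ => Or.inl rfl, by simp⟩
    · -- orthogonality
      by_cases hl : (l : ℕ) < n <;> by_cases hm : (m : ℕ) < n
      · simp only [dif_pos hl, dif_pos hm]
        rw [hZZ, if_neg]
        intro h
        exact hlm (Fin.ext (by simpa using congrArg Fin.val h))
      · simp only [dif_pos hl, dif_neg hm]
        simp_rw [Finset.sum_apply, Finset.mul_sum]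
        rw [Finset.sum_comm]
        simp [hZX]
      · simp only [dif_neg hl, dif_pos hm]
        simp_rw [Finset.sum_apply, Finset.sum_mul]
        rw [Finset.sum_comm]
        simp [hXZ]
      · exact absurd (Fin.ext (by omega : (l:ℕ) = m)) hlm
  · -- no n+2 vectors
    rintro ⟨v, hv, horth⟩
    have hrep : ∀ l, ∃ (a : Fin (n+1) → ℝ) (b : Fin n → ℝ),
        (∀ i, v l i = ∑ k, a k * X k i + ∑ j, b j * Z j i) ∧
        (a = 0 ∨ (∃ (c : ℝ) (ε : Fin (n+1) → ℝ), c ≠ 0 ∧ (∀ i, ε i = 1 ∨ ε i = -1) ∧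
          a = fun k => c * ε k) ∧ b = 0) := by
      intro l
      rcases (hv l).2 with ⟨c, hc⟩ | ⟨c, ε, hc0, hε0, hεpm, hval⟩
      · exact ⟨0, c, fun i => by rw [hc]; simp [Finset.sum_apply], Or.inl rfl⟩
      · refine ⟨fun k => c * ε k, 0, fun i => ?_, Or.inr ⟨⟨c, ε, hc0, hεpm, rfl⟩, rfl⟩⟩
        rw [hval]
        simp [Finset.sum_apply, Finset.mul_sum, mul_assoc]
    choose a b hab hcase using hrep
    have hin : ∀ l m, ∑ i, v l i * v m i
        = ∑ k, a l k * a m k + ∑ j, b l j * b m j := by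
      intro l m
      simp_rw [hab]
      exact aux_inner hON _ _ _ _
    set T : Finset (Fin (n+2)) := Finset.univ.filter (fun l => a l = 0) with hT
    -- at most one vector outside T
    have hTc : Tᶜ.card ≤ 1 := by
      refine Finset.card_le_one.mpr fun l hl m hm => ?_
      by_contra hlm
      rcases (hcase l).resolve_left (by simpa [hT] using hl) with ⟨⟨c, ε, hc0, hεpm, haε⟩, hb0⟩
      rcases (hcase m).resolve_left (by simpa [hT] using hm) with ⟨⟨d, δ, hd0, hδpm, haδ⟩, hb0'⟩
      have h0 := horth l m hlm
      rw [hin l m, haε, haδ, hb0, hb0'] at h0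
      have hsum : ∑ k, ε k * δ k = 0 := by
        have : ∑ k, (c * ε k) * (d * δ k) = c * d * ∑ k, ε k * δ k := by
          rw [Finset.mul_sum]
          exact Finset.sum_congr rfl fun k _ => by ring
        rw [this] at h0
        simp at h0
        rcases h0 with h | h
        · rcases h with h | h
          · exact absurd h hc0
          · exact absurd h hd0
        · exact h
      refine aux_pm hodd (fun k => ε k * δ k) (fun k => ?_) hsum
      rcases hεpm k with h | h <;> rcases hδpm k with h' | h' <;> simp [h, h']
    have hTcard : n + 1 ≤ T.card := by
      have := Finset.card_add_card_compl T
      simp only [Fintype.card_fin] at this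
      omega
    -- vectors b l for l ∈ T are nonzero and orthogonal in ℝ^n
    have hbne : ∀ l ∈ T, b l ≠ 0 := by
      intro l hl hb0
      have ha0 : a l = 0 := by simpa [hT] using hl
      apply (hv l).1
      funext i
      rw [hab l i, ha0, hb0]
      simp
    have hborth : ∀ l ∈ T, ∀ m ∈ T, l ≠ m → ∑ j, b l j * b m j = 0 := by
      intro l hl m hm hlm
      have ha0 : a l = 0 := by simpa [hT] using hl
      have h0 := horth l m hlm
      rw [hin l m, ha0] at h0
      simpa using h0
    -- linear independence in EuclideanSpace
    set w : T → EuclideanSpace ℝ (Fin n) := fun l => (WithLp.equiv 2 (Fin n → ℝ)).symm (b l) with hw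
    have hli : LinearIndependent ℝ w := by
      refine linearIndependent_of_ne_zero_of_inner_eq_zero (𝕜 := ℝ) ?_ ?_
      · intro l h0
        exact hbne l l.2 (funext fun j => by simpa [hw, WithLp.equiv_symm_apply] using congrArg (fun x : EuclideanSpace ℝ (Fin n) => x j) h0)
      · intro l m hlm
        have h0 : ∑ j, b l j * b m j = 0 := hborth l l.2 m m.2 (fun h => hlm (Subtype.ext h))
        simpa [hw, PiLp.inner_apply, RCLike.inner_apply, WithLp.equiv_symm_apply, mul_comm] using h0
    have hcard := hli.fintype_card_le_finrank
    rw [finrank_euclideanSpace_fin] at hcard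
    simp only [Fintype.card_coe] at hcard
    omega
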